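/- Let r ≥ 2 and a be integers with 0 < a < r and gcd(a, r) = 1, and let n be a positive integer with n ≤ ⌊(r+1)/2⌋. Then l(1/r(a, -a, 1), n) ≥ l(1/r(1, -1, 1), n), i.e. ∑_{j=1}^{n-1} \overline{bj}(r - \overline{bj})/(2r) ≥ ∑_{j=1}^{n-1} j(r - j)/(2r), where b is the inverse of a modulo r. -/
import Mathlib


/-- The Reid correction term `l(r, b, m) = ∑_{j=1}^{m-1} \overline{bj}(r-\overline{bj})/(2r)`,
where `\overline{bj}` is the smallest non-negative residue of `b*j` mod `r`.
(The `j = 0` term vanishes, so we may sum over `j ∈ range m`.) -/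
def reidL (r b m : ℕ) : ℚ :=
  ∑ j ∈ Finset.range m,
    (((b * j) % r : ℕ) : ℚ) * ((r : ℚ) - (((b * j) % r : ℕ) : ℚ)) / (2 * r)

/-- A basket of type `1/r(a, -a, 1)`: a pair of integers `(r, a)` with `r ≥ 2`,
`0 < a < r` and `gcd(a, r) = 1`. -/
structure Basket where
  r : ℕ
  a : ℕ
  two_le_r : 2 ≤ r
  a_pos : 0 < a
  a_lt_r : a < r
  coprime : Nat.Coprime a r

/-- The unique `b` with `0 < b < r` and `a * b ≡ 1 (mod r)`. -/
def Basket.binv (Q : Basket) : ℕ := ((Q.a : ZMod Q.r)⁻¹).val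

/-- The correction term `l(Q, m)` of a basket. -/
def Basket.l (Q : Basket) (m : ℕ) : ℚ := reidL Q.r Q.binv m

/-- `Δ_n(Q) := n² l(Q,2) + l(Q,n) - l(Q,n+1)`. -/
def Basket.delta (Q : Basket) (n : ℕ) : ℚ :=
  (n : ℚ) ^ 2 * Q.l 2 + Q.l n - Q.l (n + 1)

/-- A formal basket datum with `χ = 1`: a finite multiset of baskets together
with a positive rational number `K`. -/
structure FormalDatum where
  B : Multiset Basket
  K : ℚ
  K_pos : 0 < K

/-- The formal plurigenus `P(m) = (1/12)m(m-1)(2m-1)K - (2m-1) + ∑_{Q ∈ B} l(Q, m)`. -/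
def FormalDatum.P (D : FormalDatum) (m : ℕ) : ℚ :=
  (1 / 12 : ℚ) * m * (m - 1) * (2 * m - 1) * D.K - (2 * m - 1)
    + (D.B.map (fun Q => Q.l m)).sum


private lemma Fq_mono {r s t : ℕ} (hst : s ≤ t) (hsum : s + t ≤ r) :
    (s : ℚ) * ((r : ℚ) - s) / (2 * r) ≤ (t : ℚ) * ((r : ℚ) - t) / (2 * r) := by
  rcases Nat.eq_zero_or_pos r with hr | hr
  · have hs : s = 0 := by omega
    have ht : t = 0 := by omega
    simp [hs, ht]
  · have h2r : (0 : ℚ) < 2 * r := by positivity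
    have hs : (s : ℚ) ≤ t := by exact_mod_cast hst
    have hsum' : (s : ℚ) + t ≤ r := by exact_mod_cast hsum
    rw [div_le_div_iff_of_pos_right h2r]
    nlinarith

private lemma sum_range_le_sum_finset {r n : ℕ} (S : Finset ℕ) (hcard : S.card = n)
    (hbd : ∀ s ∈ S, 2 * s ≤ r) :
    ∑ j ∈ Finset.range n, (j : ℚ) * ((r : ℚ) - j) / (2 * r) ≤
      ∑ s ∈ S, (s : ℚ) * ((r : ℚ) - s) / (2 * r) := by
  induction n generalizing S with
  | zero =>
    rw [Finset.card_eq_zero.mp hcard]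
    simp
  | succ n ih =>
    have hne : S.Nonempty := by rw [← Finset.card_pos, hcard]; omega
    have hMS : S.max' hne ∈ S := S.max'_mem hne
    set M := S.max' hne with hM
    have hnM : n ≤ M := by
      have hsub : S ⊆ Finset.range (M + 1) := fun s hs =>
        Finset.mem_range.mpr (Nat.lt_succ_of_le (S.le_max' s hs))
      have := Finset.card_le_card hsub
      rw [hcard, Finset.card_range] at this
      omega
    have h2M : 2 * M ≤ r := hbd M hMS
    rw [Finset.sum_range_succ, ← Finset.add_sum_erase _ _ hMS]
    have h1 := ih (S.erase M) (by rw [Finset.card_erase_of_mem hMS, hcard]; omega) 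
      (fun s hs => hbd s (Finset.mem_of_mem_erase hs))
    have h2 : (n : ℚ) * ((r : ℚ) - n) / (2 * r) ≤ (M : ℚ) * ((r : ℚ) - M) / (2 * r) :=
      Fq_mono hnM (by omega)
    linarith

private lemma key_sum_le {r b : ℕ} (hr : 2 ≤ r) (hb : Nat.Coprime b r) {n : ℕ}
    (hn : n ≤ (r + 1) / 2) :
    ∑ j ∈ Finset.range n, (j : ℚ) * ((r : ℚ) - j) / (2 * r) ≤
      ∑ j ∈ Finset.range n,
        (((b * j) % r : ℕ) : ℚ) * ((r : ℚ) - (((b * j) % r : ℕ) : ℚ)) / (2 * r) := by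
  have hr0 : 0 < r := by omega
  set g : ℕ → ℕ := fun j => min (b * j % r) (r - b * j % r) with hg
  have hinj : ∀ j ∈ Finset.range n, ∀ k ∈ Finset.range n, g j = g k → j = k := by
    intro j hj k hk hjk
    simp only [Finset.mem_range] at hj hk
    have hx : b * j % r < r := Nat.mod_lt _ hr0
    have hy : b * k % r < r := Nat.mod_lt _ hr0
    have hcase : b * j % r = b * k % r ∨ b * j % r + b * k % r = r := by
      simp only [hg] at hjk; omega
    rcases hcase with h | h
    · have h1 : j ≡ k [MOD r] := Nat.ModEq.cancel_left_of_coprime hb.symm h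
      have h2 : j % r = k % r := h1
      rw [Nat.mod_eq_of_lt (by omega), Nat.mod_eq_of_lt (by omega)] at h2
      exact h2
    · exfalso
      have h1 : (b * j + b * k) % r = 0 := by
        rw [Nat.add_mod, h, Nat.mod_self]
      have h2 : r ∣ b * (j + k) := by
        rw [Nat.mul_add]
        exact Nat.dvd_of_mod_eq_zero h1
      have h3 : r ∣ j + k := (Nat.Coprime.dvd_of_dvd_mul_left (hb.symm) h2)
      have h4 : j + k < r := by omega
      have h5 : j + k = 0 := Nat.eq_zero_of_dvd_of_lt h3 h4
      have hj0 : j = 0 := by omega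
      have hk0 : k = 0 := by omega
      rw [hj0, hk0] at h
      simp at h
      omega
  have hterm : ∀ j : ℕ,
      ((g j : ℕ) : ℚ) * ((r : ℚ) - (g j : ℕ)) / (2 * r) =
        (((b * j) % r : ℕ) : ℚ) * ((r : ℚ) - (((b * j) % r : ℕ) : ℚ)) / (2 * r) := by
    intro j
    have hx : b * j % r < r := Nat.mod_lt _ hr0
    rcases le_total (b * j % r) (r - b * j % r) with hc | hc
    · simp only [hg, min_eq_left hc]
    · simp only [hg, min_eq_right hc]
      have hxle : b * j % r ≤ r := hx.le
      push_cast [Nat.cast_sub hxle]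
      ring
  have hcard : ((Finset.range n).image g).card = n := by
    rw [Finset.card_image_of_injOn, Finset.card_range]
    intro x hx y hy hxy
    exact hinj x (by simpa using hx) y (by simpa using hy) hxy
  have hbd : ∀ s ∈ (Finset.range n).image g, 2 * s ≤ r := by
    intro s hs
    rcases Finset.mem_image.mp hs with ⟨j, _, rfl⟩
    have hx : b * j % r < r := Nat.mod_lt _ hr0
    simp only [hg]
    omega
  calc ∑ j ∈ Finset.range n, (j : ℚ) * ((r : ℚ) - j) / (2 * r)
      ≤ ∑ s ∈ (Finset.range n).image g, (s : ℚ) * ((r : ℚ) - s) / (2 * r) :=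
        sum_range_le_sum_finset _ hcard hbd
    _ = ∑ j ∈ Finset.range n, ((g j : ℕ) : ℚ) * ((r : ℚ) - (g j : ℕ)) / (2 * r) :=
        Finset.sum_image hinj
    _ = _ := Finset.sum_congr rfl fun j _ => hterm j

/-- For a basket `Q = 1/r(a, -a, 1)` and `1 ≤ n ≤ ⌊(r+1)/2⌋`, one has
`l(1/r(a,-a,1), n) ≥ l(1/r(1,-1,1), n)`, i.e.
`∑_{j=1}^{n-1} \overline{bj}(r-\overline{bj})/(2r) ≥ ∑_{j=1}^{n-1} j(r-j)/(2r)`,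
where `b` is the inverse of `a` mod `r`. -/
theorem basket_l_ge_reidL_one (Q : Basket) (n : ℕ) (hn : 0 < n)
    (hle : n ≤ (Q.r + 1) / 2) :
    reidL Q.r 1 n ≤ Q.l n ∧
    ∑ j ∈ Finset.range n, (j : ℚ) * ((Q.r : ℚ) - (j : ℚ)) / (2 * Q.r) ≤
      ∑ j ∈ Finset.range n,
        (((Q.binv * j) % Q.r : ℕ) : ℚ) * ((Q.r : ℚ) - (((Q.binv * j) % Q.r : ℕ) : ℚ))
          / (2 * Q.r) := by
  haveI : NeZero Q.r := ⟨by have := Q.two_le_r; omega⟩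
  have hb : Nat.Coprime Q.binv Q.r := by
    have hu : IsUnit (Q.a : ZMod Q.r) := by
      rw [ZMod.isUnit_iff_coprime]
      exact Q.coprime
    have : (Q.a : ZMod Q.r)⁻¹ = ((hu.unit⁻¹ : (ZMod Q.r)ˣ) : ZMod Q.r) := by
      rw [← ZMod.inv_coe_unit, hu.unit_spec]
    unfold Basket.binv
    rw [this]
    exact ZMod.val_coe_unit_coprime _
  have key := key_sum_le Q.two_le_r hb hle
  refine ⟨?_, key⟩
  have h1 : reidL Q.r 1 n = ∑ j ∈ Finset.range n, (j : ℚ) * ((Q.r : ℚ) - j) / (2 * Q.r) := by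
    unfold reidL
    refine Finset.sum_congr rfl fun j hj => ?_
    have hj' : j < n := Finset.mem_range.mp hj
    have hjr : j < Q.r := by have := Q.two_le_r; omega
    rw [one_mul, Nat.mod_eq_of_lt hjr]
  rw [h1]
  exact key
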